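/- If C_B ⊆ F₂^{nt} is a linear code with minimum Hamming distance d = 2t+1 and parity check matrix H = [h_1,...,h_{nt}] of rank nt - k_B, then the TE code C_TE ⊆ F₂^{n×2t} defined by the TE parity check array 𝓗 (with 𝓗_{i,j} = h_{(i-1)t+j} for j ≤ t and 𝓗_{i,j} = h_{(i mod n)t + 2t - j + 1} for j > t) is a linear code of dimension k_B + nt and minimum ρ_TE-distance exactly d = 2t+1. -/

import Mathlib

/-- Row-wise tail-erasure distance: 0 if rows equal, else `L - (least differing index)`,
which equals `L - min{i : x_i ≠ y_i} + 1` in 1-indexed notation. -/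
def rhoRow {L : ℕ} (x y : Fin L → ZMod 2) : ℕ :=
  if h : x = y then 0
  else
    L - (Finset.univ.filter (fun j => x j ≠ y j)).min' (by
      obtain ⟨j, hj⟩ := Function.ne_iff.mp h
      exact ⟨j, Finset.mem_filter.mpr ⟨Finset.mem_univ j, hj⟩⟩)

/-- The tail-erasure distance on binary `n × L` arrays: sum of row distances. -/
def rhoTE {n L : ℕ} (X Y : Fin n → Fin L → ZMod 2) : ℕ :=
  ∑ i, rhoRow (X i) (Y i)

/-- Base index of entry `(i,j)` of the TE parity check array 𝓗 of Construction 1. -/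
def baseIdx (n t : ℕ) (i : Fin n) (j : Fin (2 * t)) : ℕ :=
  if (j : ℕ) < t then (i : ℕ) * t + (j : ℕ)
  else (((i : ℕ) + 1) % n) * t + (2 * t - 1 - (j : ℕ))

/-- The base index as an element of `Fin (n*t)` (the `% (n*t)` is a no-op since
`baseIdx < n*t`). -/
def baseIdxFin (n t : ℕ) (hnt : 0 < n * t) (i : Fin n) (j : Fin (2 * t)) : Fin (n * t) :=
  ⟨baseIdx n t i j % (n * t), Nat.mod_lt _ hnt⟩


def castF (t : ℕ) (r : Fin t) : Fin (2 * t) := ⟨r.1, by omega⟩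
def embF (t : ℕ) (r : Fin t) : Fin (2 * t) := ⟨2 * t - 1 - r.1, by have := r.2; omega⟩

lemma castF_inj {t : ℕ} : Function.Injective (castF t) := by
  intro a b hab
  have h1 := congrArg Fin.val hab
  exact Fin.ext h1

lemma embF_inj {t : ℕ} : Function.Injective (embF t) := by
  intro a b hab
  have h1 := congrArg Fin.val hab
  simp only [embF] at h1
  have := a.2; have := b.2
  exact Fin.ext (by omega)

lemma mul_add_lt {n t : ℕ} (i : Fin n) (r : Fin t) : i.1 * t + r.1 < n * t :=
  calc i.1 * t + r.1 < i.1 * t + t := by have := r.2; omega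
  _ = (i.1 + 1) * t := by ring
  _ ≤ n * t := Nat.mul_le_mul_right t i.2

lemma finProdFinEquiv_val {n t : ℕ} (i : Fin n) (r : Fin t) :
    (finProdFinEquiv (i, r) : Fin (n * t)).1 = i.1 * t + r.1 := by
  simp only [finProdFinEquiv, Equiv.coe_fn_mk]
  rw [Nat.mul_comm]
  omega

lemma baseIdxFin_castF {n t : ℕ} (hnt : 0 < n * t) (i : Fin n) (r : Fin t) :
    baseIdxFin n t hnt i (castF t r) = finProdFinEquiv (i, r) := by
  apply Fin.ext
  rw [finProdFinEquiv_val]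
  simp only [baseIdxFin, baseIdx, castF]
  simp only [r.2, if_true]
  rw [Nat.mod_eq_of_lt (mul_add_lt i r)]

lemma baseIdxFin_embF {n t : ℕ} [NeZero n] (hn : 2 ≤ n) (hnt : 0 < n * t) (i : Fin n) (r : Fin t) :
    baseIdxFin n t hnt i (embF t r) = finProdFinEquiv (i + 1, r) := by
  apply Fin.ext
  rw [finProdFinEquiv_val]
  simp only [baseIdxFin, baseIdx, embF]
  have hr := r.2
  simp only [show ¬(2 * t - 1 - r.1 < t) by omega, if_false]
  have h1 : 2 * t - 1 - (2 * t - 1 - r.1) = r.1 := by omega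
  have h2 : (i + 1 : Fin n).1 = (i.1 + 1) % n := by
    rw [Fin.add_def]
    simp [Fin.val_one', Nat.mod_eq_of_lt (show 1 < n by omega)]
  rw [h1, ← h2, Nat.mod_eq_of_lt (mul_add_lt (i+1) r)]

def halfEquiv (t : ℕ) : Fin t ⊕ Fin t ≃ Fin (2 * t) where
  toFun := Sum.elim (castF t) (embF t)
  invFun j := if h : (j : ℕ) < t then .inl ⟨j, h⟩ else .inr ⟨2 * t - 1 - j.1, by omega⟩
  left_inv := by
    rintro (r | r) <;> simp only [Sum.elim_inl, Sum.elim_inr, castF, embF]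
    · exact dif_pos r.2
    · refine (dif_neg (show ¬(2 * t - 1 - r.1 < t) by have := r.2; omega)).trans ?_
      congr 1
      apply Fin.ext
      show 2 * t - 1 - (2 * t - 1 - r.1) = r.1
      have := r.2; omega
  right_inv := by
    intro j
    dsimp only
    by_cases h : (j : ℕ) < t
    · rw [dif_pos h]; rfl
    · rw [dif_neg h]
      simp only [Sum.elim_inr, embF]
      apply Fin.ext
      show 2 * t - 1 - (2 * t - 1 - j.1) = j.1
      have := j.2; omega

lemma sum_half {t : ℕ} {M : Type*} [AddCommMonoid M] (f : Fin (2*t) → M) :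
    ∑ j, f j = ∑ r, f (castF t r) + ∑ r, f (embF t r) := by
  rw [← Equiv.sum_comp (halfEquiv t) f, Fintype.sum_sum_type]
  rfl

/-- The "folding" map: `phiTE X ∈ C_B` iff `X ∈ C_TE`. -/
def phiTE (n t : ℕ) [NeZero n] (X : Fin n → Fin (2 * t) → ZMod 2) (k : Fin (n * t)) : ZMod 2 :=
  X (finProdFinEquiv.symm k).1 (castF t (finProdFinEquiv.symm k).2) +
    X ((finProdFinEquiv.symm k).1 - 1) (embF t (finProdFinEquiv.symm k).2)

lemma phiTE_apply {n t : ℕ} [NeZero n] (X : Fin n → Fin (2 * t) → ZMod 2) (i : Fin n) (r : Fin t) :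
    phiTE n t X (finProdFinEquiv (i, r)) = X i (castF t r) + X (i - 1) (embF t r) := by
  simp [phiTE]

open Finset in
lemma wt_le {n t : ℕ} [NeZero n] (Z : Fin n → Fin (2 * t) → ZMod 2) :
    (univ.filter fun k : Fin (n * t) => phiTE n t Z k ≠ 0).card ≤
      ∑ i, (univ.filter fun j => Z i j ≠ 0).card := by
  classical
  set T : Finset (Fin n × Fin (2 * t)) := univ.filter fun p => Z p.1 p.2 ≠ 0 with hT
  have step1 : (univ.filter fun k : Fin (n * t) => phiTE n t Z k ≠ 0).card ≤ T.card := by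
    apply Finset.card_le_card_of_injOn (fun k =>
      if Z (finProdFinEquiv.symm k).1 (castF t (finProdFinEquiv.symm k).2) ≠ 0 then
        ((finProdFinEquiv.symm k).1, castF t (finProdFinEquiv.symm k).2)
      else ((finProdFinEquiv.symm k).1 - 1, embF t (finProdFinEquiv.symm k).2))
    · intro k hk
      rw [Finset.mem_coe, Finset.mem_filter] at hk
      have hphi : phiTE n t Z k ≠ 0 := hk.2
      by_cases h1 : Z (finProdFinEquiv.symm k).1 (castF t (finProdFinEquiv.symm k).2) ≠ 0
      · simp only [if_pos h1]
        exact Finset.mem_filter.mpr ⟨Finset.mem_univ _, h1⟩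
      · simp only [if_neg h1]
        push_neg at h1
        refine Finset.mem_filter.mpr ⟨Finset.mem_univ _, ?_⟩
        intro h2
        apply hphi
        rw [phiTE, h1, h2, add_zero]
    · intro k1 hk1 k2 hk2 heq
      simp only at heq
      by_cases h1 : Z (finProdFinEquiv.symm k1).1 (castF t (finProdFinEquiv.symm k1).2) ≠ 0 <;>
        by_cases h2 : Z (finProdFinEquiv.symm k2).1 (castF t (finProdFinEquiv.symm k2).2) ≠ 0
      · rw [if_pos h1, if_pos h2, Prod.mk.injEq] at heq
        have : finProdFinEquiv.symm k1 = finProdFinEquiv.symm k2 :=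
          Prod.ext heq.1 (castF_inj heq.2)
        exact finProdFinEquiv.symm.injective this
      · rw [if_pos h1, if_neg h2, Prod.mk.injEq] at heq
        exfalso
        have hv := congrArg Fin.val heq.2
        simp only [castF, embF] at hv
        have := (finProdFinEquiv.symm k1).2.2
        have := (finProdFinEquiv.symm k2).2.2
        omega
      · rw [if_neg h1, if_pos h2, Prod.mk.injEq] at heq
        exfalso
        have hv := congrArg Fin.val heq.2
        simp only [castF, embF] at hv
        have := (finProdFinEquiv.symm k1).2.2
        have := (finProdFinEquiv.symm k2).2.2
        omega
      · rw [if_neg h1, if_neg h2, Prod.mk.injEq] at heq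
        have hfst : (finProdFinEquiv.symm k1).1 = (finProdFinEquiv.symm k2).1 := by
          have := heq.1
          have h3 : (finProdFinEquiv.symm k1).1 - 1 + 1 = (finProdFinEquiv.symm k2).1 - 1 + 1 := by
            rw [this]
          simpa [sub_add_cancel] using h3
        have : finProdFinEquiv.symm k1 = finProdFinEquiv.symm k2 :=
          Prod.ext hfst (embF_inj heq.2)
        exact finProdFinEquiv.symm.injective this
  have step2 : T.card = ∑ i, (univ.filter fun j => Z i j ≠ 0).card := by
    rw [Finset.card_eq_sum_card_fiberwise (f := fun p => p.1) (t := univ)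
      (fun x _ => Finset.mem_univ _)]
    refine Finset.sum_congr rfl fun i _ => ?_
    refine Finset.card_bij' (fun p _ => p.2) (fun j _ => (i, j)) ?_ ?_ ?_ ?_
    · intro p hp
      rw [Finset.mem_filter] at hp
      have h1 := hp.2
      have h2 := (Finset.mem_filter.mp hp.1).2
      rw [Finset.mem_filter]
      exact ⟨Finset.mem_univ _, h1 ▸ h2⟩
    · intro j hj
      rw [Finset.mem_filter] at hj ⊢
      exact ⟨Finset.mem_filter.mpr ⟨Finset.mem_univ _, hj.2⟩, rfl⟩
    · intro p hp
      rw [Finset.mem_filter] at hp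
      exact Prod.ext hp.2.symm rfl
    · intro j _
      rfl
  omega

lemma sum_TE {n t : ℕ} [NeZero n] (hn : 2 ≤ n) (hnt : 0 < n * t) {M : Type*} [AddCommMonoid M]
    [Module (ZMod 2) M] (h : Fin (n * t) → M) (X : Fin n → Fin (2 * t) → ZMod 2) :
    ∑ i, ∑ j, X i j • h (baseIdxFin n t hnt i j) = ∑ k, phiTE n t X k • h k := by
  rw [← Equiv.sum_comp finProdFinEquiv (fun k => phiTE n t X k • h k), Fintype.sum_prod_type]
  have rhs : ∀ i : Fin n, ∀ r : Fin t,
      phiTE n t X (finProdFinEquiv (i, r)) • h (finProdFinEquiv (i, r)) =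
      X i (castF t r) • h (finProdFinEquiv (i, r)) +
        X (i - 1) (embF t r) • h (finProdFinEquiv (i, r)) := by
    intro i r
    rw [phiTE_apply, add_smul]
  simp only [rhs]
  rw [Finset.sum_congr rfl (fun i _ => Finset.sum_add_distrib), Finset.sum_add_distrib]
  have lhs : ∀ i : Fin n, ∑ j, X i j • h (baseIdxFin n t hnt i j) =
      ∑ r, X i (castF t r) • h (finProdFinEquiv (i, r)) +
        ∑ r, X i (embF t r) • h (finProdFinEquiv (i + 1, r)) := by
    intro i
    rw [sum_half (fun j => X i j • h (baseIdxFin n t hnt i j))]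
    congr 1
    · exact Finset.sum_congr rfl fun r _ => by rw [baseIdxFin_castF]
    · exact Finset.sum_congr rfl fun r _ => by rw [baseIdxFin_embF hn]
  rw [Finset.sum_congr rfl (fun i _ => lhs i), Finset.sum_add_distrib]
  congr 1
  rw [← Equiv.sum_comp (Equiv.subRight (1 : Fin n))
    (fun i => ∑ r, X i (embF t r) • h (finProdFinEquiv (i + 1, r)))]
  refine Finset.sum_congr rfl fun i _ => Finset.sum_congr rfl fun r _ => by
    simp [Equiv.subRight, sub_add_cancel]

lemma zmod2_aab : ∀ a b : ZMod 2, a + b + b = a := by decide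

/-- Reconstruct an array from its fold and its second halves. -/
def recX (n t : ℕ) [NeZero n] (c : Fin (n * t) → ZMod 2) (W : Fin n → Fin t → ZMod 2)
    (i : Fin n) (j : Fin (2 * t)) : ZMod 2 :=
  if hj : (j : ℕ) < t then c (finProdFinEquiv (i, ⟨j.1, hj⟩)) + W (i - 1) ⟨j.1, hj⟩
  else W i ⟨2 * t - 1 - j.1, by have := j.2; omega⟩

lemma recX_castF {n t : ℕ} [NeZero n] (c : Fin (n * t) → ZMod 2) (W : Fin n → Fin t → ZMod 2)
    (i : Fin n) (r : Fin t) :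
    recX n t c W i (castF t r) = c (finProdFinEquiv (i, r)) + W (i - 1) r := by
  rw [recX, dif_pos (show ((castF t r : Fin (2*t)) : ℕ) < t from r.2)]
  have hfin : (⟨((castF t r : Fin (2*t)) : ℕ), r.2⟩ : Fin t) = r := Fin.ext rfl
  rw [hfin]

lemma recX_embF {n t : ℕ} [NeZero n] (c : Fin (n * t) → ZMod 2) (W : Fin n → Fin t → ZMod 2)
    (i : Fin n) (r : Fin t) :
    recX n t c W i (embF t r) = W i r := by
  have hr := r.2
  rw [recX, dif_neg (show ¬((embF t r : Fin (2*t)) : ℕ) < t by simp only [embF]; omega)]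
  congr 1
  apply Fin.ext
  show 2 * t - 1 - (2 * t - 1 - r.1) = r.1
  omega

lemma phiTE_recX {n t : ℕ} [NeZero n] (c : Fin (n * t) → ZMod 2) (W : Fin n → Fin t → ZMod 2) :
    phiTE n t (recX n t c W) = c := by
  funext k
  obtain ⟨⟨i, r⟩, rfl⟩ := finProdFinEquiv.surjective k
  rw [phiTE_apply, recX_castF, recX_embF, zmod2_aab]

lemma recX_phiTE {n t : ℕ} [NeZero n] (X : Fin n → Fin (2 * t) → ZMod 2) :
    recX n t (phiTE n t X) (fun i r => X i (embF t r)) = X := by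
  funext i j
  by_cases hj : (j : ℕ) < t
  · rw [recX, dif_pos hj, phiTE_apply]
    have hcast : castF t ⟨j.1, hj⟩ = j := Fin.ext rfl
    rw [hcast, zmod2_aab]
  · rw [recX, dif_neg hj]
    congr 1
    apply Fin.ext
    show 2 * t - 1 - (2 * t - 1 - j.1) = j.1
    have := j.2; omega

lemma rhoRow_ge {L : ℕ} (x y : Fin L → ZMod 2) (j : Fin L) (hj : x j ≠ y j) :
    L - j.1 ≤ rhoRow x y := by
  have hxy : x ≠ y := fun hc => hj (congrFun hc j)
  rw [rhoRow, dif_neg hxy]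
  have hmem : j ∈ Finset.univ.filter (fun j => x j ≠ y j) :=
    Finset.mem_filter.mpr ⟨Finset.mem_univ j, hj⟩
  have := Finset.min'_le _ j hmem
  omega

lemma row_filter_card_le {L : ℕ} (x y : Fin L → ZMod 2) :
    (Finset.univ.filter (fun j => x j ≠ y j)).card ≤ rhoRow x y := by
  by_cases hxy : x = y
  · have : (Finset.univ.filter (fun j => x j ≠ y j)) = ∅ := by
      subst hxy; simp
    rw [this]; simp
  · rw [rhoRow, dif_neg hxy]
    set D := Finset.univ.filter (fun j => x j ≠ y j) with hD
    have hne : D.Nonempty := by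
      obtain ⟨j, hj⟩ := Function.ne_iff.mp hxy
      exact ⟨j, Finset.mem_filter.mpr ⟨Finset.mem_univ j, hj⟩⟩
    have hsub : D ⊆ Finset.Ici (D.min' hne) := fun j hj => Finset.mem_Ici.mpr (Finset.min'_le _ j hj)
    calc D.card ≤ (Finset.Ici (D.min' hne)).card := Finset.card_le_card hsub
      _ = L - (D.min' hne).1 := Fin.card_Ici _

lemma rhoRow_single {L : ℕ} (x : Fin L → ZMod 2) (j0 : Fin L) (h1 : x j0 ≠ 0)
    (h2 : ∀ j, j ≠ j0 → x j = 0) : rhoRow x (fun _ => 0) = L - j0.1 := by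
  have hne : x ≠ (fun _ => 0) := fun hc => h1 (congrFun hc j0)
  rw [rhoRow, dif_neg hne]
  set D := Finset.univ.filter (fun j => x j ≠ (fun _ : Fin L => (0 : ZMod 2)) j) with hD
  have hDne : D.Nonempty := by
    obtain ⟨j, hj⟩ := Function.ne_iff.mp hne
    exact ⟨j, Finset.mem_filter.mpr ⟨Finset.mem_univ j, hj⟩⟩
  have hmin : D.min' hDne = j0 := by
    apply le_antisymm
    · exact Finset.min'_le D j0 (Finset.mem_filter.mpr ⟨Finset.mem_univ j0, h1⟩)
    · apply Finset.le_min'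
      intro y hy
      rw [Finset.mem_filter] at hy
      by_cases hc : y = j0
      · subst hc; exact le_refl _
      · exact absurd (h2 y hc) hy.2
  rw [hmin]

lemma phiTE_sub {n t : ℕ} [NeZero n] (X Y : Fin n → Fin (2 * t) → ZMod 2) :
    phiTE n t (fun i j => X i j - Y i j) = fun k => phiTE n t X k - phiTE n t Y k := by
  funext k
  simp only [phiTE]
  ring

/-- if `C_B ⊆ F₂^{nt}` is linear of dimension `k_B` (i.e. size `2^{k_B}`)
with minimum Hamming distance exactly `d = 2t+1` and parity check matrix with columns
`h_1,…,h_{nt}`, then the code `C_TE ⊆ F₂^{n×2t}` cut out by the TE parity check array 𝓗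
has dimension `k_B + nt` (size `2^{k_B+nt}`) and minimum ρ_TE-distance exactly `2t+1`. -/
theorem stmt_6 (n t kB : ℕ) (hn : 3 ≤ n) (ht : 1 ≤ t) (hk : kB ≤ n * t)
    (hnt : 0 < n * t)
    (h : Fin (n * t) → Fin (n * t - kB) → ZMod 2)
    (CB : Set (Fin (n * t) → ZMod 2))
    (hCBdef : CB = {x | ∑ k, x k • h k = 0})
    (hCBcard : Nat.card CB = 2 ^ kB)
    (hCBdist : ∀ x ∈ CB, ∀ y ∈ CB, x ≠ y → 2 * t + 1 ≤ hammingDist x y)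
    (hCBdist' : ∃ x ∈ CB, ∃ y ∈ CB, x ≠ y ∧ hammingDist x y = 2 * t + 1)
    (CTE : Set (Fin n → Fin (2 * t) → ZMod 2))
    (hCTEdef : CTE = {X | ∑ i, ∑ j, X i j • h (baseIdxFin n t hnt i j) = 0}) :
    Nat.card CTE = 2 ^ (kB + n * t) ∧
    (∀ X ∈ CTE, ∀ Y ∈ CTE, X ≠ Y → 2 * t + 1 ≤ rhoTE X Y) ∧
    (∃ X ∈ CTE, ∃ Y ∈ CTE, X ≠ Y ∧ rhoTE X Y = 2 * t + 1) := by
  haveI : NeZero n := ⟨by omega⟩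
  have hn2 : 2 ≤ n := by omega
  have hmem : ∀ X : Fin n → Fin (2 * t) → ZMod 2, X ∈ CTE ↔ phiTE n t X ∈ CB := by
    intro X
    rw [hCTEdef, hCBdef]
    simp only [Set.mem_setOf_eq]
    rw [sum_TE hn2 hnt h X]
  refine ⟨?_, ?_, ?_⟩
  · -- cardinality
    have E : ↥CTE ≃ ↥CB × (Fin n → Fin t → ZMod 2) :=
      { toFun := fun X => (⟨phiTE n t X.1, (hmem X.1).mp X.2⟩, fun i r => X.1 i (embF t r))
        invFun := fun cw => ⟨recX n t cw.1.1 cw.2,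
          (hmem _).mpr (by rw [phiTE_recX]; exact cw.1.2)⟩
        left_inv := fun X => Subtype.ext (recX_phiTE X.1)
        right_inv := fun cw => by
          refine Prod.ext (Subtype.ext ?_) ?_
          · exact phiTE_recX _ _
          · funext i r; exact recX_embF _ _ _ _ }
    rw [Nat.card_congr E, Nat.card_prod, hCBcard, Nat.card_eq_fintype_card]
    have hcard : Fintype.card (Fin n → Fin t → ZMod 2) = 2 ^ (n * t) := by
      rw [Fintype.card_fun, Fintype.card_fun, ZMod.card, Fintype.card_fin, Fintype.card_fin,
        ← pow_mul, Nat.mul_comm]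
    rw [hcard, ← pow_add]
  · -- lower bound
    intro X hX Y hY hXY
    by_contra hlt
    push_neg at hlt
    set Z : Fin n → Fin (2 * t) → ZMod 2 := fun i j => X i j - Y i j with hZ
    have hZCB : phiTE n t Z ∈ CB := by
      rw [hCBdef]
      simp only [Set.mem_setOf_eq]
      have hx : ∑ k, phiTE n t X k • h k = 0 := by
        rw [← sum_TE hn2 hnt h X]
        rw [hCTEdef] at hX
        exact hX
      have hy : ∑ k, phiTE n t Y k • h k = 0 := by
        rw [← sum_TE hn2 hnt h Y]
        rw [hCTEdef] at hY
        exact hY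
      calc ∑ k, phiTE n t Z k • h k
          = ∑ k, (phiTE n t X k • h k - phiTE n t Y k • h k) := by
            refine Finset.sum_congr rfl fun k _ => ?_
            rw [hZ, phiTE_sub, sub_smul]
        _ = 0 := by rw [Finset.sum_sub_distrib, hx, hy, sub_zero]
    have h0CB : (0 : Fin (n * t) → ZMod 2) ∈ CB := by
      rw [hCBdef]; simp
    have hwt : hammingDist (phiTE n t Z) 0 ≤ rhoTE X Y := by
      have h1 : hammingDist (phiTE n t Z) 0 =
          (Finset.univ.filter fun k => phiTE n t Z k ≠ 0).card := by
        simp [hammingDist]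
      rw [h1]
      calc (Finset.univ.filter fun k => phiTE n t Z k ≠ 0).card
          ≤ ∑ i, (Finset.univ.filter fun j => Z i j ≠ 0).card := wt_le Z
        _ ≤ ∑ i, rhoRow (X i) (Y i) := by
            refine Finset.sum_le_sum fun i _ => ?_
            have : (Finset.univ.filter fun j => Z i j ≠ 0) =
                Finset.univ.filter fun j => X i j ≠ Y i j := by
              ext j
              simp [hZ, sub_ne_zero]
            rw [this]
            exact row_filter_card_le (X i) (Y i)
        _ = rhoTE X Y := rfl
    have hphiZ0 : phiTE n t Z = 0 := by
      by_contra hne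
      have := hCBdist _ hZCB 0 h0CB hne
      omega
    have hZne : ∃ i j, Z i j ≠ 0 := by
      obtain ⟨i, hi⟩ := Function.ne_iff.mp hXY
      obtain ⟨j, hj⟩ := Function.ne_iff.mp hi
      exact ⟨i, j, sub_ne_zero_of_ne hj⟩
    obtain ⟨i0, j0, hij0⟩ := hZne
    have key : ∃ i, ∃ r : Fin t, Z i (castF t r) ≠ 0 := by
      by_cases hj : (j0 : ℕ) < t
      · refine ⟨i0, ⟨j0.1, hj⟩, ?_⟩
        have hc : castF t ⟨j0.1, hj⟩ = j0 := Fin.ext rfl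
        rw [hc]; exact hij0
      · have hj2 := j0.2
        refine ⟨i0 + 1, ⟨2 * t - 1 - j0.1, by omega⟩, ?_⟩
        have hzero := congrFun hphiZ0 (finProdFinEquiv (i0 + 1, ⟨2 * t - 1 - j0.1, by omega⟩))
        rw [phiTE_apply] at hzero
        simp only [Pi.zero_apply] at hzero
        have h1 : (i0 + 1 - 1 : Fin n) = i0 := by
          rw [add_sub_cancel_right]
        have h2 : embF t (⟨2 * t - 1 - j0.1, by omega⟩ : Fin t) = j0 := by
          apply Fin.ext
          show 2 * t - 1 - (2 * t - 1 - j0.1) = j0.1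
          omega
        rw [h1, h2] at hzero
        intro hc
        rw [hc, zero_add] at hzero
        exact hij0 hzero
    obtain ⟨i, r, hir⟩ := key
    have hzero := congrFun hphiZ0 (finProdFinEquiv (i, r))
    rw [phiTE_apply] at hzero
    simp only [Pi.zero_apply] at hzero
    have hprev : Z (i - 1) (embF t r) ≠ 0 := by
      intro hc
      rw [hc, add_zero] at hzero
      exact hir hzero
    have hne_rows : i - 1 ≠ i := by
      intro hc
      have h10 : (1 : Fin n) = 0 := sub_eq_self.mp hc
      have := congrArg Fin.val h10
      simp [Fin.val_one', Nat.mod_eq_of_lt (show 1 < n by omega)] at this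
    have hb1 : 2 * t - r.1 ≤ rhoRow (X i) (Y i) := by
      have := rhoRow_ge (X i) (Y i) (castF t r) (sub_ne_zero.mp hir)
      simpa [castF] using this
    have hb2 : r.1 + 1 ≤ rhoRow (X (i - 1)) (Y (i - 1)) := by
      have := rhoRow_ge (X (i - 1)) (Y (i - 1)) (embF t r) (sub_ne_zero.mp hprev)
      simp only [embF] at this
      have hr2 := r.2
      omega
    have hsum : rhoRow (X (i - 1)) (Y (i - 1)) + rhoRow (X i) (Y i) ≤ rhoTE X Y := by
      have hsub := Finset.sum_le_sum_of_subset
        (Finset.subset_univ ({i - 1, i} : Finset (Fin n)))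
        (f := fun i => rhoRow (X i) (Y i))
      rwa [Finset.sum_pair hne_rows] at hsub
    have hr2 := r.2
    omega
  · -- existence
    have h1v : ((1 : Fin n) : ℕ) = 1 := by
      simp [Fin.val_one', Nat.mod_eq_of_lt (show 1 < n by omega)]
    have h10 : (1 : Fin n) ≠ 0 := by
      intro hc
      have := congrArg Fin.val hc
      rw [h1v] at this
      simp at this
    set Z0 : Fin n → Fin (2 * t) → ZMod 2 := fun i j =>
      if i = 1 ∧ (j : ℕ) = t - 1 then 1 else if i = 0 ∧ (j : ℕ) = t then 1 else 0 with hZ0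
    have hY0 : (fun _ _ => (0 : ZMod 2)) ∈ CTE := by
      rw [hCTEdef]
      simp
    have hj1 : t - 1 < 2 * t := by omega
    have hj2 : t < 2 * t := by omega
    have ha : Z0 (1 : Fin n) ⟨t - 1, hj1⟩ = 1 := by
      rw [hZ0]
      simp
    have hbv : Z0 (0 : Fin n) ⟨t, hj2⟩ = 1 := by
      rw [hZ0]
      simp [h10, (by omega : ¬ t = t - 1)]
    have hZ0other : ∀ (i : Fin n) (j : Fin (2 * t)), ¬(i = 1 ∧ (j : ℕ) = t - 1) →
        ¬(i = 0 ∧ (j : ℕ) = t) → Z0 i j = 0 := by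
      intro i j hA hB
      rw [hZ0]
      simp only
      rw [if_neg hA, if_neg hB]
    have hZ0mem : Z0 ∈ CTE := by
      rw [hCTEdef]
      simp only [Set.mem_setOf_eq]
      rw [← Fintype.sum_prod_type']
      rw [Finset.sum_eq_add_of_mem ((1 : Fin n), (⟨t - 1, hj1⟩ : Fin (2 * t)))
        ((0 : Fin n), (⟨t, hj2⟩ : Fin (2 * t))) (Finset.mem_univ _) (Finset.mem_univ _)
        (by
          intro hc
          have := congrArg (fun p => (p.2 : ℕ)) hc
          simp at this
          omega)
        (by
          rintro ⟨ci, cj⟩ _ ⟨hca, hcb⟩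
          have : Z0 ci cj = 0 := by
            apply hZ0other
            · intro ⟨hci, hcj⟩
              exact hca (by subst hci; exact congrArg _ (Fin.ext hcj))
            · intro ⟨hci, hcj⟩
              exact hcb (by subst hci; exact congrArg _ (Fin.ext hcj))
          rw [this, zero_smul])]
      rw [ha, hbv]
      have hbase1 : baseIdxFin n t hnt (1 : Fin n) ⟨t - 1, hj1⟩ =
          baseIdxFin n t hnt (0 : Fin n) ⟨t, hj2⟩ := by
        apply Fin.ext
        simp only [baseIdxFin, baseIdx]
        rw [if_pos (by omega : t - 1 < t), if_neg (by omega : ¬ t < t)]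
        congr 1
        simp only [h1v, Fin.val_zero]
        rw [Nat.mod_eq_of_lt (show 0 + 1 < n by omega)]
        omega
      rw [hbase1, ← add_smul]
      have h2z : (1 : ZMod 2) + 1 = 0 := by decide
      rw [h2z, zero_smul]
    refine ⟨Z0, hZ0mem, (fun _ _ => 0), hY0, ?_, ?_⟩
    · intro hc
      have := congrFun (congrFun hc (1 : Fin n)) ⟨t - 1, hj1⟩
      rw [ha] at this
      exact one_ne_zero this
    · rw [rhoTE]
      rw [Finset.sum_eq_add_of_mem (0 : Fin n) (1 : Fin n) (Finset.mem_univ _) (Finset.mem_univ _)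
        (Ne.symm h10)
        (by
          intro c _ ⟨hc0, hc1⟩
          have hrow : Z0 c = fun _ => 0 := by
            funext j
            apply hZ0other
            · intro ⟨hci, _⟩; exact hc1 hci
            · intro ⟨hci, _⟩; exact hc0 hci
          show rhoRow (Z0 c) (fun _ => 0) = 0
          rw [rhoRow, dif_pos hrow])]
      have hrow0 : rhoRow (Z0 0) (fun _ => 0) = 2 * t - t := by
        apply rhoRow_single _ ⟨t, hj2⟩
        · rw [hbv]; exact one_ne_zero
        · intro j hj
          apply hZ0other
          · intro ⟨hci, _⟩; exact h10 hci.symm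
          · intro ⟨_, hcj⟩; exact hj (Fin.ext hcj)
      have hrow1 : rhoRow (Z0 1) (fun _ => 0) = 2 * t - (t - 1) := by
        apply rhoRow_single _ ⟨t - 1, hj1⟩
        · rw [ha]; exact one_ne_zero
        · intro j hj
          apply hZ0other
          · intro ⟨_, hcj⟩; exact hj (Fin.ext hcj)
          · intro ⟨hci, _⟩; exact h10 hci
      show rhoRow (Z0 0) (fun _ => 0) + rhoRow (Z0 1) (fun _ => 0) = 2 * t + 1
      rw [hrow0, hrow1]
      omega
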